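/- There exists a universal constant c > 0 such that for every ε > 0 and every pair of Borel probability measures P₀, P₁ on ℝ^m: if d_sig(P₀,P₁) < ε, then sup over a ∈ ℝ^m and t ∈ ℝ of |P₀{u : aᵀu ≤ t} − P₁{u : aᵀu ≤ t}| < c·ε. -/

import Mathlib

open MeasureTheory Filter Topology

/-- The sigmoid function `σ(t) = 1/(1 + e^{-t})`. -/
noncomputable def sigmoid (t : ℝ) : ℝ := 1 / (1 + Real.exp (-t))

/-- The sigmoid IPM between two measures on `ℝ^m`. -/
noncomputable def sigmoidIPM {m : ℕ} (P₀ P₁ : Measure (Fin m → ℝ)) : ℝ :=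
  ⨆ p : (Fin m → ℝ) × ℝ,
    |(∫ z, sigmoid ((∑ i, p.1 i * z i) + p.2) ∂P₀) -
      ∫ z, sigmoid ((∑ i, p.1 i * z i) + p.2) ∂P₁|

lemma sigmoid_nonneg (x : ℝ) : 0 ≤ sigmoid x := by
  unfold sigmoid; positivity

lemma sigmoid_le_one (x : ℝ) : sigmoid x ≤ 1 := by
  unfold sigmoid
  rw [div_le_one (by positivity)]
  linarith [Real.exp_pos (-x)]

lemma sigmoid_eq : sigmoid = fun x => (1 + Real.exp (-x))⁻¹ := by
  ext x; simp [sigmoid, one_div]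

lemma sigmoid_tendsto_atTop : Tendsto sigmoid atTop (𝓝 1) := by
  have h : Tendsto (fun x : ℝ => Real.exp (-x)) atTop (𝓝 0) :=
    Real.tendsto_exp_neg_atTop_nhds_zero
  have h2 : Tendsto (fun x : ℝ => 1 / (1 + Real.exp (-x))) atTop (𝓝 (1 / (1 + 0))) :=
    Tendsto.div tendsto_const_nhds (tendsto_const_nhds.add h) (by norm_num)
  rw [sigmoid_eq]; simpa using h2

lemma sigmoid_tendsto_atBot : Tendsto sigmoid atBot (𝓝 0) := by
  have h : Tendsto (fun x : ℝ => 1 + Real.exp (-x)) atBot atTop := by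
    apply tendsto_atTop_add_const_left
    exact Real.tendsto_exp_atTop.comp tendsto_neg_atBot_atTop
  have := tendsto_inv_atTop_zero.comp h
  rw [sigmoid_eq]
  simpa [Function.comp_def] using this

lemma sigmoid_continuous : Continuous sigmoid := by
  rw [sigmoid_eq]
  exact (continuous_const.add (Real.continuous_exp.comp continuous_neg)).inv₀
    (fun x => by show (1 : ℝ) + Real.exp (-x) ≠ 0; positivity)

lemma sigmoid_norm_le_one (x : ℝ) : ‖sigmoid x‖ ≤ 1 := by
  rw [Real.norm_eq_abs, abs_le]
  exact ⟨by linarith [sigmoid_nonneg x], sigmoid_le_one x⟩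

lemma sqrt_nat_tendsto : Tendsto (fun n : ℕ => Real.sqrt n) atTop atTop := by
  rw [tendsto_atTop]
  intro b
  filter_upwards [eventually_ge_atTop (Nat.ceil ((b ⊔ 0) ^ 2))] with n hn
  have h1 : ((b ⊔ 0) ^ 2 : ℝ) ≤ n :=
    le_trans (Nat.le_ceil _) (by exact_mod_cast hn)
  calc b ≤ b ⊔ 0 := le_max_left _ _
    _ = Real.sqrt ((b ⊔ 0) ^ 2) := (Real.sqrt_sq (le_max_right _ _)).symm
    _ ≤ Real.sqrt n := Real.sqrt_le_sqrt h1

lemma key_tendsto {m : ℕ} (P : Measure (Fin m → ℝ)) [IsProbabilityMeasure P]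
    (a : Fin m → ℝ) (t : ℝ) :
    Tendsto (fun n : ℕ =>
        ∫ z, sigmoid ((∑ i, (-(n : ℝ) * a i) * z i) + ((n : ℝ) * t + Real.sqrt n)) ∂P)
      atTop (𝓝 ((P {u | (∑ i, a i * u i) ≤ t}).toReal)) := by
  set s : Set (Fin m → ℝ) := {u | (∑ i, a i * u i) ≤ t} with hs_def
  have hmeas : Measurable (fun u : Fin m → ℝ => ∑ i, a i * u i) :=
    Finset.measurable_sum _ (fun i _ => by fun_prop)
  have hs : MeasurableSet s := measurableSet_le hmeas measurable_const
  have hint : ∫ z, s.indicator (fun _ => (1:ℝ)) z ∂P = (P s).toReal := by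
    rw [integral_indicator_const (1:ℝ) hs]; simp [Measure.real]
  rw [← hint]
  apply tendsto_integral_of_dominated_convergence (fun _ => (1:ℝ))
  · intro n
    apply Continuous.aestronglyMeasurable
    exact sigmoid_continuous.comp
      ((continuous_finset_sum _ fun i _ => continuous_const.mul (continuous_apply i)).add
        continuous_const)
  · exact integrable_const 1
  · intro n
    filter_upwards with z using sigmoid_norm_le_one _
  · filter_upwards with z
    have hsum : ∀ n : ℕ, (∑ i, (-(n : ℝ) * a i) * z i) = -((n : ℝ) * ∑ i, a i * z i) := by
      intro n
      rw [Finset.mul_sum, ← Finset.sum_neg_distrib]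
      exact Finset.sum_congr rfl (fun i _ => by ring)
    have harg : ∀ n : ℕ, (∑ i, (-(n : ℝ) * a i) * z i) + ((n : ℝ) * t + Real.sqrt n)
        = (n : ℝ) * (t - ∑ i, a i * z i) + Real.sqrt n := by
      intro n; rw [hsum n]; ring
    simp only [harg]
    by_cases hz : (∑ i, a i * z i) ≤ t
    · have hmem : z ∈ s := hz
      rw [Set.indicator_of_mem hmem]
      have harg_top : Tendsto (fun n : ℕ => (n : ℝ) * (t - ∑ i, a i * z i) + Real.sqrt n)
          atTop atTop := by
        apply tendsto_atTop_mono (fun n => ?_) sqrt_nat_tendsto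
        have : 0 ≤ (n : ℝ) * (t - ∑ i, a i * z i) :=
          mul_nonneg (Nat.cast_nonneg n) (by linarith)
        linarith
      exact sigmoid_tendsto_atTop.comp harg_top
    · have hmem : z ∉ s := hz
      rw [Set.indicator_of_notMem hmem]
      push_neg at hz
      have harg_bot : Tendsto (fun n : ℕ => (n : ℝ) * (t - ∑ i, a i * z i) + Real.sqrt n)
          atTop atBot := by
        have heq : (fun n : ℕ => (n : ℝ) * (t - ∑ i, a i * z i) + Real.sqrt n)
            = fun n : ℕ => Real.sqrt n * (Real.sqrt n * (t - ∑ i, a i * z i) + 1) := by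
          funext n
          have : Real.sqrt n * Real.sqrt n = (n : ℝ) := Real.mul_self_sqrt (Nat.cast_nonneg n)
          nlinarith [this]
        rw [heq]
        apply Tendsto.atTop_mul_atBot₀ sqrt_nat_tendsto
        apply tendsto_atBot_add_const_right
        exact Tendsto.atTop_mul_const_of_neg' (by linarith) sqrt_nat_tendsto
      exact sigmoid_tendsto_atBot.comp harg_bot

lemma abs_integral_sigmoid_le {m : ℕ} (P : Measure (Fin m → ℝ)) [IsProbabilityMeasure P]
    (θ : Fin m → ℝ) (μ : ℝ) :
    |∫ z, sigmoid ((∑ i, θ i * z i) + μ) ∂P| ≤ 1 := by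
  have := norm_integral_le_of_norm_le_const (μ := P)
    (f := fun z : Fin m → ℝ => sigmoid ((∑ i, θ i * z i) + μ)) (C := 1)
    (Eventually.of_forall fun z => sigmoid_norm_le_one _)
  simpa [measure_univ] using this

/-- there is a universal constant `c > 0` such that for every `ε > 0` and
every pair of Borel probability measures `P₀, P₁` on `ℝ^m` with `d_sig(P₀,P₁) < ε`,
all half-space probabilities differ by less than `c·ε`:
`sup_{a,t} |P₀{u : aᵀu ≤ t} - P₁{u : aᵀu ≤ t}| < c·ε`. -/
theorem halfspace_bound_of_sigmoidIPM_lt :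
    ∃ c : ℝ, 0 < c ∧
      ∀ (m : ℕ) (ε : ℝ), 0 < ε →
        ∀ (P₀ P₁ : Measure (Fin m → ℝ)),
          IsProbabilityMeasure P₀ → IsProbabilityMeasure P₁ →
          sigmoidIPM P₀ P₁ < ε →
          ∀ (a : Fin m → ℝ) (t : ℝ),
            |(P₀ {u | (∑ i, a i * u i) ≤ t}).toReal -
              (P₁ {u | (∑ i, a i * u i) ≤ t}).toReal| < c * ε := by
  refine ⟨2, by norm_num, fun m ε hε P₀ P₁ h₀ h₁ hIPM a t => ?_⟩
  have hbdd : BddAbove (Set.range fun p : (Fin m → ℝ) × ℝ =>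
      |(∫ z, sigmoid ((∑ i, p.1 i * z i) + p.2) ∂P₀) -
        ∫ z, sigmoid ((∑ i, p.1 i * z i) + p.2) ∂P₁|) := by
    refine ⟨2, ?_⟩
    rintro x ⟨p, rfl⟩
    calc |(∫ z, sigmoid ((∑ i, p.1 i * z i) + p.2) ∂P₀) -
        ∫ z, sigmoid ((∑ i, p.1 i * z i) + p.2) ∂P₁|
        ≤ |∫ z, sigmoid ((∑ i, p.1 i * z i) + p.2) ∂P₀| +
          |∫ z, sigmoid ((∑ i, p.1 i * z i) + p.2) ∂P₁| := abs_sub _ _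
      _ ≤ 1 + 1 := add_le_add (abs_integral_sigmoid_le P₀ _ _) (abs_integral_sigmoid_le P₁ _ _)
      _ = 2 := by norm_num
  have hterm : ∀ n : ℕ,
      |(∫ z, sigmoid ((∑ i, (-(n : ℝ) * a i) * z i) + ((n : ℝ) * t + Real.sqrt n)) ∂P₀) -
        ∫ z, sigmoid ((∑ i, (-(n : ℝ) * a i) * z i) + ((n : ℝ) * t + Real.sqrt n)) ∂P₁|
      ≤ sigmoidIPM P₀ P₁ := by
    intro n
    exact le_ciSup hbdd ((fun i => -(n : ℝ) * a i, (n : ℝ) * t + Real.sqrt n))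
  have hlim : Tendsto (fun n : ℕ =>
      |(∫ z, sigmoid ((∑ i, (-(n : ℝ) * a i) * z i) + ((n : ℝ) * t + Real.sqrt n)) ∂P₀) -
        ∫ z, sigmoid ((∑ i, (-(n : ℝ) * a i) * z i) + ((n : ℝ) * t + Real.sqrt n)) ∂P₁|)
      atTop (𝓝 |(P₀ {u | (∑ i, a i * u i) ≤ t}).toReal -
        (P₁ {u | (∑ i, a i * u i) ≤ t}).toReal|) :=
    ((key_tendsto P₀ a t).sub (key_tendsto P₁ a t)).abs
  have hle : |(P₀ {u | (∑ i, a i * u i) ≤ t}).toReal -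
      (P₁ {u | (∑ i, a i * u i) ≤ t}).toReal| ≤ sigmoidIPM P₀ P₁ :=
    le_of_tendsto hlim (Eventually.of_forall hterm)
  calc |(P₀ {u | (∑ i, a i * u i) ≤ t}).toReal -
      (P₁ {u | (∑ i, a i * u i) ≤ t}).toReal| ≤ sigmoidIPM P₀ P₁ := hle
    _ < ε := hIPM
    _ ≤ 2 * ε := by linarith
  -- need strict <, last step should be < for 2*ε; fix below
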